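/- Let λ be a real number with 0 < λ < 1 and λ ≠ 1/2. Then (1/(λ(1−λ))) · ∫₀^∞ ∫₀^∞ (x² / (x + y)) · exp(−x/λ − y/(1−λ)) dx dy = λ² · ( 2λ(4λ − 5) − 2(1−λ)² · ln((1−λ)/λ) + 3 ) / (2λ − 1)³. -/

import Mathlib

open MeasureTheory

section Helpers

open MeasureTheory Set Filter Topology

lemma cm_atTop {c : ℝ} (hc : 0 < c) : Tendsto (fun t : ℝ => c * t) atTop atTop :=
  Tendsto.const_mul_atTop hc tendsto_id

lemma exp_tendsto_zero {c : ℝ} (hc : 0 < c) :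
    Tendsto (fun t : ℝ => Real.exp (-(c * t))) atTop (𝓝 0) :=
  Real.tendsto_exp_atBot.comp (tendsto_neg_atTop_atBot.comp (cm_atTop hc))

lemma pow_exp_tendsto_zero {c : ℝ} (hc : 0 < c) (n : ℕ) :
    Tendsto (fun t : ℝ => t ^ n * Real.exp (-(c * t))) atTop (𝓝 0) := by
  have h := ((Real.tendsto_pow_mul_exp_neg_atTop_nhds_zero n).comp (cm_atTop hc)).div_const (c ^ n)
  rw [zero_div] at h
  refine h.congr fun t => ?_
  simp only [Function.comp]
  rw [mul_pow]
  field_simp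

lemma intOn_exp {c : ℝ} (hc : 0 < c) :
    IntegrableOn (fun t : ℝ => Real.exp (-(c * t))) (Ioi 0) := by
  simpa [neg_mul] using exp_neg_integrableOn_Ioi 0 hc

lemma integral_exp_neg_mul {c : ℝ} (hc : 0 < c) :
    ∫ t in Ioi (0 : ℝ), Real.exp (-(c * t)) = 1 / c := by
  have hderiv : ∀ t ∈ Ici (0:ℝ), HasDerivAt (fun t : ℝ => -Real.exp (-(c * t)) / c)
      (Real.exp (-(c * t))) t := by
    intro t _
    have h1 : HasDerivAt (fun t : ℝ => -(c * t)) (-c) t := by simpa using ((hasDerivAt_id t).const_mul c).fun_neg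
    have := (h1.exp.fun_neg).div_const c
    exact this.congr_deriv (by field_simp)
  have htend : Tendsto (fun t : ℝ => -Real.exp (-(c * t)) / c) atTop (𝓝 0) := by
    have := ((exp_tendsto_zero hc).neg).div_const c
    simpa using this
  have := integral_Ioi_of_hasDerivAt_of_tendsto' hderiv (intOn_exp hc) htend
  rw [this]
  field_simp
  simp

lemma sq_exp_deriv {c : ℝ} (hc : 0 < c) (x : ℝ) :
    HasDerivAt (fun x : ℝ => -(x ^ 2 / c + 2 * x / c ^ 2 + 2 / c ^ 3) * Real.exp (-(c * x)))
      (x ^ 2 * Real.exp (-(c * x))) x := by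
  have hP : HasDerivAt (fun x : ℝ => -(x ^ 2 / c + 2 * x / c ^ 2 + 2 / c ^ 3))
      (-(2 * x / c + 2 / c ^ 2)) x := by
    have h1 := (hasDerivAt_pow 2 x).div_const c
    have h2 := ((hasDerivAt_id x).const_mul 2).div_const (c ^ 2)
    have := ((h1.fun_add h2).add_const (2 / c ^ 3)).fun_neg
    exact this.congr_deriv (by simp)
  have hE : HasDerivAt (fun x : ℝ => Real.exp (-(c * x))) (Real.exp (-(c * x)) * (-c)) x := by
    have h1 : HasDerivAt (fun x : ℝ => -(c * x)) (-c) x := by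
      simpa using ((hasDerivAt_id x).const_mul c).fun_neg
    exact h1.exp
  have := hP.fun_mul hE
  exact this.congr_deriv (by field_simp; ring)

lemma sq_exp_tendsto {c : ℝ} (hc : 0 < c) :
    Tendsto (fun x : ℝ => -(x ^ 2 / c + 2 * x / c ^ 2 + 2 / c ^ 3) * Real.exp (-(c * x)))
      atTop (𝓝 0) := by
  have h2 := (pow_exp_tendsto_zero hc 2).div_const c
  have h1 := ((pow_exp_tendsto_zero hc 1).const_mul 2).div_const (c ^ 2)
  have h0 := ((exp_tendsto_zero hc).const_mul 2).div_const (c ^ 3)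
  have := ((h2.add h1).add h0).neg
  simp only [zero_div, add_zero, neg_zero, mul_zero, zero_add] at this
  refine this.congr fun x => ?_
  ring

lemma intOn_sq_exp {c : ℝ} (hc : 0 < c) :
    IntegrableOn (fun x : ℝ => x ^ 2 * Real.exp (-(c * x))) (Ioi 0) :=
  integrableOn_Ioi_deriv_of_nonneg' (fun x _ => sq_exp_deriv hc x)
    (fun x hx => by positivity) (sq_exp_tendsto hc)

lemma integral_sq_exp {c : ℝ} (hc : 0 < c) :
    ∫ x in Ioi (0 : ℝ), x ^ 2 * Real.exp (-(c * x)) = 2 / c ^ 3 := by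
  have := integral_Ioi_of_hasDerivAt_of_nonneg' (a := 0) (l := 0) (fun x _ => sq_exp_deriv hc x)
    (fun x hx => by positivity) (sq_exp_tendsto hc)
  rw [this]
  simp
section KeyFTC

variable {A B : ℝ}

lemma add_tendsto_atTop (A : ℝ) : Tendsto (fun t : ℝ => t + A) atTop atTop :=
  tendsto_atTop_add_const_right atTop A tendsto_id

lemma ratio_tendsto_one (A B : ℝ) :
    Tendsto (fun t : ℝ => (t + A) / (t + B)) atTop (𝓝 1) := by
  have hn : Tendsto (fun t : ℝ => 1 + A / t) atTop (𝓝 1) := by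
    simpa using (tendsto_const_nhds (x := (1:ℝ))).add
      ((tendsto_const_nhds (x := A)).div_atTop tendsto_id)
  have hd : Tendsto (fun t : ℝ => 1 + B / t) atTop (𝓝 1) := by
    simpa using (tendsto_const_nhds (x := (1:ℝ))).add
      ((tendsto_const_nhds (x := B)).div_atTop tendsto_id)
  have h := hn.div hd one_ne_zero
  rw [div_one] at h
  refine h.congr' ?_
  filter_upwards [Filter.Ioi_mem_atTop (0:ℝ)] with t ht
  have ht0 : t ≠ 0 := ne_of_gt ht
  simp only [Pi.div_apply]
  field_simp

lemma log_diff_tendsto_zero (hA : 0 < A) (hB : 0 < B) :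
    Tendsto (fun t : ℝ => Real.log (t + A) - Real.log (t + B)) atTop (𝓝 0) := by
  have h : Tendsto (fun t : ℝ => Real.log ((t + A) / (t + B))) atTop (𝓝 0) := by
    have := (Real.continuousAt_log (one_ne_zero)).tendsto.comp (ratio_tendsto_one A B)
    simpa [Function.comp_def] using this
  refine h.congr' ?_
  filter_upwards [Filter.Ioi_mem_atTop (0:ℝ)] with t ht
  have ht' : (0:ℝ) < t := ht
  rw [Real.log_div (by linarith) (by linarith)]

noncomputable def keyG (A B : ℝ) : ℝ → ℝ := fun t =>
  -(1 / (B - A)) * ((t + A) ^ 2)⁻¹ + (2 / (B - A) ^ 2) * (t + A)⁻¹ +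
    (2 / (B - A) ^ 3) * (Real.log (t + A) - Real.log (t + B))

lemma keyG_deriv (hA : 0 < A) (hB : 0 < B) (hAB : A ≠ B) {t : ℝ} (ht : t ∈ Ici (0:ℝ)) :
    HasDerivAt (keyG A B) (2 / ((t + A) ^ 3 * (t + B))) t := by
  have htA : (0:ℝ) < t + A := by have := ht.out; linarith
  have htB : (0:ℝ) < t + B := by have := ht.out; linarith
  have hD : B - A ≠ 0 := sub_ne_zero.2 (Ne.symm hAB)
  have h1 : HasDerivAt (fun t : ℝ => t + A) 1 t := (hasDerivAt_id t).add_const A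
  have h1B : HasDerivAt (fun t : ℝ => t + B) 1 t := (hasDerivAt_id t).add_const B
  have hp2 : HasDerivAt (fun t : ℝ => (t + A) ^ 2) (2 * (t + A)) t := by
    simpa using h1.fun_pow 2
  have hinv2 : HasDerivAt (fun t : ℝ => ((t + A) ^ 2)⁻¹)
      (-(2 * (t + A)) / ((t + A) ^ 2) ^ 2) t := hp2.fun_inv (by positivity)
  have hinv1 : HasDerivAt (fun t : ℝ => (t + A)⁻¹) (-1 / (t + A) ^ 2) t := by
    simpa using h1.fun_inv htA.ne'
  have hlogA : HasDerivAt (fun t : ℝ => Real.log (t + A)) (1 / (t + A)) t := by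
    simpa using h1.log htA.ne'
  have hlogB : HasDerivAt (fun t : ℝ => Real.log (t + B)) (1 / (t + B)) t := by
    simpa using h1B.log htB.ne'
  have := ((hinv2.const_mul (-(1 / (B - A)))).fun_add
      (hinv1.const_mul (2 / (B - A) ^ 2))).fun_add
      ((hlogA.fun_sub hlogB).const_mul (2 / (B - A) ^ 3))
  have e1 : t + B = (t + A) + (B - A) := by ring
  exact this.congr_deriv (by field_simp; ring)

lemma keyG_tendsto (hA : 0 < A) (hB : 0 < B) :
    Tendsto (keyG A B) atTop (𝓝 0) := by
  have t2 : Tendsto (fun t : ℝ => ((t + A) ^ 2)⁻¹) atTop (𝓝 0) :=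
    ((tendsto_pow_atTop (two_ne_zero)).comp (add_tendsto_atTop A)).inv_tendsto_atTop
  have t1 : Tendsto (fun t : ℝ => (t + A)⁻¹) atTop (𝓝 0) :=
    (add_tendsto_atTop A).inv_tendsto_atTop
  have h := ((t2.const_mul (-(1 / (B - A)))).add (t1.const_mul (2 / (B - A) ^ 2))).add
    ((log_diff_tendsto_zero hA hB).const_mul (2 / (B - A) ^ 3))
  have h0 : (-(1 / (B - A)) * 0 + 2 / (B - A) ^ 2 * 0 + 2 / (B - A) ^ 3 * 0 : ℝ) = 0 := by ring
  rw [h0] at h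
  exact h

lemma key_nonneg (hA : 0 < A) (hB : 0 < B) {t : ℝ} (ht : t ∈ Ioi (0:ℝ)) :
    0 ≤ 2 / ((t + A) ^ 3 * (t + B)) := by
  have := ht.out
  positivity

lemma key_integrableOn (hA : 0 < A) (hB : 0 < B) (hAB : A ≠ B) :
    IntegrableOn (fun t : ℝ => 2 / ((t + A) ^ 3 * (t + B))) (Ioi 0) :=
  integrableOn_Ioi_deriv_of_nonneg' (fun t ht => keyG_deriv hA hB hAB ht)
    (fun t ht => key_nonneg hA hB ht) (keyG_tendsto hA hB)

lemma key_integral (hA : 0 < A) (hB : 0 < B) (hAB : A ≠ B) :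
    ∫ t in Ioi (0:ℝ), 2 / ((t + A) ^ 3 * (t + B)) =
      1 / ((B - A) * A ^ 2) - 2 / ((B - A) ^ 2 * A) -
        (2 / (B - A) ^ 3) * (Real.log A - Real.log B) := by
  have := integral_Ioi_of_hasDerivAt_of_nonneg' (a := 0) (l := 0)
    (fun t ht => keyG_deriv hA hB hAB ht) (fun t ht => key_nonneg hA hB ht)
    (keyG_tendsto hA hB)
  rw [this]
  have hD : B - A ≠ 0 := sub_ne_zero.2 (Ne.symm hAB)
  simp only [keyG, zero_add, zero_sub]
  field_simp
  ring

end KeyFTC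
end Helpers

open MeasureTheory Set Filter Topology in
/-- The `⟨↑↑|ρ⁽²⁾|↑↑⟩` matrix element of the second moment of the Scrooge ensemble of a
qubit density matrix with eigenvalues `λ, 1−λ`, in Gaussian-integral form. -/
theorem qubit_scrooge_second_moment
    (lam : ℝ) (h0 : 0 < lam) (h1 : lam < 1) (hhalf : lam ≠ 1 / 2) :
    (1 / (lam * (1 - lam))) *
      (∫ x in Set.Ioi (0:ℝ), ∫ y in Set.Ioi (0:ℝ),
        (x ^ 2 / (x + y)) * Real.exp (-x / lam - y / (1 - lam))) =
    lam ^ 2 * (2 * lam * (4 * lam - 5) -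
        2 * (1 - lam) ^ 2 * Real.log ((1 - lam) / lam) + 3) /
      (2 * lam - 1) ^ 3 := by
  have hb : (0:ℝ) < 1 - lam := by linarith
  set A : ℝ := 1 / lam with hAdef
  set B : ℝ := 1 / (1 - lam) with hBdef
  have hA : 0 < A := by positivity
  have hB : 0 < B := by positivity
  have hAB : A ≠ B := by
    intro h
    rw [hAdef, hBdef, div_eq_div_iff h0.ne' hb.ne'] at h
    apply hhalf; linarith
  set f : ℝ → ℝ → ℝ := fun x y => x ^ 2 / (x + y) * Real.exp (-x / lam - y / (1 - lam))
    with hfdef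
  have hfm : Measurable (Function.uncurry f) := by
    apply Measurable.mul
    · exact (measurable_fst.pow_const 2).div (measurable_fst.add measurable_snd)
    · exact ((measurable_fst.neg.div_const lam).sub (measurable_snd.div_const (1 - lam))).exp
  have hfnn : ∀ x ∈ Set.Ioi (0:ℝ), ∀ y ∈ Set.Ioi (0:ℝ), 0 ≤ f x y := by
    intro x hx y hy
    have hx0 : (0:ℝ) < x := hx
    have hy0 : (0:ℝ) < y := hy
    have hxy : (0:ℝ) < x + y := by linarith
    exact mul_nonneg (div_nonneg (sq_nonneg x) hxy.le) (Real.exp_pos _).le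
  have hfi : ∀ x ∈ Set.Ioi (0:ℝ), IntegrableOn (f x) (Set.Ioi 0) := by
    intro x hx
    have hx0 : (0:ℝ) < x := hx
    refine Integrable.mono' ((intOn_exp hB).const_mul (x * Real.exp (-x / lam)))
      (hfm.of_uncurry_left).aestronglyMeasurable ?_
    filter_upwards [self_mem_ae_restrict measurableSet_Ioi] with y hy
    have hy0 : (0:ℝ) < y := hy
    have hxy : (0:ℝ) < x + y := by linarith
    rw [Real.norm_eq_abs, abs_of_nonneg (hfnn x hx y hy)]
    have hsplit : -x / lam - y / (1 - lam) = -x / lam + -(B * y) := by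
      rw [hBdef]; ring
    have h1' : x ^ 2 / (x + y) ≤ x := by
      rw [div_le_iff₀ hxy]; nlinarith
    calc f x y = x ^ 2 / (x + y) * (Real.exp (-x / lam) * Real.exp (-(B * y))) := by
          show x ^ 2 / (x + y) * Real.exp (-x / lam - y / (1 - lam)) = _
          rw [hsplit, Real.exp_add]
      _ ≤ x * (Real.exp (-x / lam) * Real.exp (-(B * y))) :=
          mul_le_mul_of_nonneg_right h1' (by positivity)
      _ = x * Real.exp (-x / lam) * Real.exp (-(B * y)) := by ring
  -- the three-variable integrand
  set G1 : ℝ → ℝ → ℝ → ℝ := fun x y t =>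
    x ^ 2 * Real.exp (-((A + t) * x)) * Real.exp (-((B + t) * y)) with hG1def
  set G2 : ℝ → ℝ → ℝ := fun x t =>
    x ^ 2 * Real.exp (-((A + t) * x)) * (1 / (B + t)) with hG2def
  -- Schwinger trick pointwise
  have hSch : ∀ x ∈ Set.Ioi (0:ℝ), ∀ y ∈ Set.Ioi (0:ℝ),
      ENNReal.ofReal (f x y) = ∫⁻ t in Set.Ioi (0:ℝ), ENNReal.ofReal (G1 x y t) := by
    intro x hx y hy
    have hx0 : (0:ℝ) < x := hx
    have hy0 : (0:ℝ) < y := hy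
    have hxy : (0:ℝ) < x + y := by linarith
    have hC : f x y = ∫ t in Set.Ioi (0:ℝ),
        (x ^ 2 * Real.exp (-x / lam - y / (1 - lam))) * Real.exp (-((x + y) * t)) := by
      rw [integral_const_mul, integral_exp_neg_mul hxy]
      show x ^ 2 / (x + y) * Real.exp (-x / lam - y / (1 - lam)) = _
      ring
    rw [hC, ofReal_integral_eq_lintegral_ofReal
      ((intOn_exp hxy).const_mul (x ^ 2 * Real.exp (-x / lam - y / (1 - lam))))
      (ae_of_all _ fun t => by positivity)]
    refine lintegral_congr fun t => ?_
    congr 1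
    show x ^ 2 * Real.exp (-x / lam - y / (1 - lam)) * Real.exp (-((x + y) * t))
      = x ^ 2 * Real.exp (-((A + t) * x)) * Real.exp (-((B + t) * y))
    rw [mul_assoc, mul_assoc, ← Real.exp_add, ← Real.exp_add]
    congr 1
    rw [hAdef, hBdef]
    field_simp
    ring
  -- inner y-lintegral of G1
  have hyint : ∀ (x : ℝ), ∀ t ∈ Set.Ioi (0:ℝ),
      ∫⁻ y in Set.Ioi (0:ℝ), ENNReal.ofReal (G1 x y t) = ENNReal.ofReal (G2 x t) := by
    intro x t ht
    have ht0 : (0:ℝ) < t := ht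
    have hBt : (0:ℝ) < B + t := by linarith
    rw [← ofReal_integral_eq_lintegral_ofReal
      ((intOn_exp hBt).const_mul (x ^ 2 * Real.exp (-((A + t) * x))))
      (ae_of_all _ fun y => by positivity)]
    rw [integral_const_mul, integral_exp_neg_mul hBt]
  -- x-lintegral of G2
  have hxint : ∀ t ∈ Set.Ioi (0:ℝ),
      ∫⁻ x in Set.Ioi (0:ℝ), ENNReal.ofReal (G2 x t)
        = ENNReal.ofReal (2 / ((t + A) ^ 3 * (t + B))) := by
    intro t ht
    have ht0 : (0:ℝ) < t := ht
    have hAt : (0:ℝ) < A + t := by linarith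
    have hBt : (0:ℝ) < B + t := by linarith
    rw [← ofReal_integral_eq_lintegral_ofReal
      ((intOn_sq_exp hAt).mul_const (1 / (B + t)))
      (ae_of_all _ fun x => by positivity)]
    rw [integral_mul_const, integral_sq_exp hAt]
    congr 1
    rw [add_comm t A, add_comm t B]
    field_simp
  -- main chain
  have hmain : (∫ x in Set.Ioi (0:ℝ), ∫ y in Set.Ioi (0:ℝ), f x y)
      = ∫ t in Set.Ioi (0:ℝ), 2 / ((t + A) ^ 3 * (t + B)) := by
    have hV : 0 ≤ ∫ t in Set.Ioi (0:ℝ), 2 / ((t + A) ^ 3 * (t + B)) :=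
      setIntegral_nonneg measurableSet_Ioi fun t ht => key_nonneg hA hB ht
    have hhm : AEStronglyMeasurable (fun x => ∫ y in Set.Ioi (0:ℝ), f x y)
        (volume.restrict (Set.Ioi 0)) :=
      hfm.aestronglyMeasurable.integral_prod_right'
    have hnn0 : 0 ≤ᵐ[volume.restrict (Set.Ioi 0)] fun x => ∫ y in Set.Ioi (0:ℝ), f x y := by
      filter_upwards [self_mem_ae_restrict measurableSet_Ioi] with x hx
      exact setIntegral_nonneg measurableSet_Ioi fun y hy => hfnn x hx y hy
    rw [integral_eq_lintegral_of_nonneg_ae hnn0 hhm]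
    rw [show (∫⁻ x in Set.Ioi (0:ℝ), ENNReal.ofReal (∫ y in Set.Ioi (0:ℝ), f x y))
        = ∫⁻ x in Set.Ioi (0:ℝ), ∫⁻ t in Set.Ioi (0:ℝ), ENNReal.ofReal (G2 x t) from ?_]
    · rw [lintegral_lintegral_swap (by fun_prop)]
      rw [setLIntegral_congr_fun measurableSet_Ioi
        (fun t ht => hxint t ht)]
      rw [← ofReal_integral_eq_lintegral_ofReal (key_integrableOn hA hB hAB)
        (by filter_upwards [self_mem_ae_restrict measurableSet_Ioi] with t ht
            exact key_nonneg hA hB ht)]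
      rw [ENNReal.toReal_ofReal hV]
    · refine setLIntegral_congr_fun measurableSet_Ioi (fun x hx => ?_)
      rw [ofReal_integral_eq_lintegral_ofReal (hfi x hx)
        (by filter_upwards [self_mem_ae_restrict measurableSet_Ioi] with y hy
            exact hfnn x hx y hy)]
      rw [setLIntegral_congr_fun measurableSet_Ioi
        (fun y hy => hSch x hx y hy)]
      rw [lintegral_lintegral_swap (by fun_prop)]
      exact setLIntegral_congr_fun measurableSet_Ioi
        (fun t ht => hyint x t ht)
  rw [show (∫ x in Set.Ioi (0:ℝ), ∫ y in Set.Ioi (0:ℝ),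
      x ^ 2 / (x + y) * Real.exp (-x / lam - y / (1 - lam)))
      = ∫ x in Set.Ioi (0:ℝ), ∫ y in Set.Ioi (0:ℝ), f x y from rfl]
  rw [hmain, key_integral hA hB hAB]
  -- final algebra
  have hlam : lam ≠ 0 := h0.ne'
  have hlam1 : (1:ℝ) - lam ≠ 0 := hb.ne'
  have h2l : 2 * lam - 1 ≠ 0 := by
    intro h; apply hhalf; linarith
  have hlog1 : Real.log A = -Real.log lam := by
    rw [hAdef, one_div, Real.log_inv]
  have hlog2 : Real.log B = -Real.log (1 - lam) := by
    rw [hBdef, one_div, Real.log_inv]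
  have hlog3 : Real.log ((1 - lam) / lam) = Real.log (1 - lam) - Real.log lam :=
    Real.log_div hlam1 hlam
  have hBA : B - A = (2 * lam - 1) / (lam * (1 - lam)) := by
    rw [hAdef, hBdef]
    field_simp
    ring
  rw [hlog1, hlog2, hlog3, hBA, hAdef]
  field_simp
  ring
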